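/- Every derivation of v_n = s_{n,1} s_{n,2} ... s_{n,n-1} from u_n = s_{1,1} s_{2,1} ... s_{n,1} by braid relations uses at least C(n,3) = n³/6 + O(n²) relations of type s_i s_{i+1} s_i = s_{i+1} s_i s_{i+1}. -/

import Mathlib

open scoped Classical

noncomputable section

/-- adjacent transposition `s i = (i, i+1)` acting on ℕ (1-indexed positions) -/
def s (i : ℕ) : Equiv.Perm ℕ := Equiv.swap i (i + 1)

/-- permutation represented by a word; letters are applied left to right
(`wperm (u ++ v) = wperm v * wperm u`, i.e. `u` first, then `v`). -/
def wperm (w : List ℕ) : Equiv.Perm ℕ := ((w.map s).reverse).prod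

/-- `w` is an `n`-expression: a word in the letters `s 1, ..., s (n-1)` -/
def IsExpr (n : ℕ) (w : List ℕ) : Prop := ∀ i ∈ w, 1 ≤ i ∧ i + 1 ≤ n

/-- set of inversions of a permutation of `{1,...,n}` -/
def invSet (n : ℕ) (π : Equiv.Perm ℕ) : Finset (ℕ × ℕ) :=
  (Finset.Icc 1 n ×ˢ Finset.Icc 1 n).filter (fun pq => pq.1 < pq.2 ∧ π pq.2 < π pq.1)

/-- a reduced `n`-expression: its length equals the inversion number of the
permutation it represents -/
def ReducedExpr (n : ℕ) (w : List ℕ) : Prop :=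
  IsExpr n w ∧ w.length = (invSet n (wperm w)).card

/-- one application of a braid relation `s i s j s i = s j s i s j`, `|i-j| = 1` -/
inductive StepI : List ℕ → List ℕ → Prop
  | mk (a b : List ℕ) (i j : ℕ) (h : i + 1 = j ∨ j + 1 = i) :
      StepI (a ++ i :: j :: i :: b) (a ++ j :: i :: j :: b)

/-- one application of a commutation relation `s i s j = s j s i`, `|i-j| ≥ 2` -/
inductive StepII : List ℕ → List ℕ → Prop
  | mk (a b : List ℕ) (i j : ℕ) (h : i + 2 ≤ j ∨ j + 2 ≤ i) :
      StepII (a ++ i :: j :: b) (a ++ j :: i :: b)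

def BraidStep (u v : List ℕ) : Prop := StepI u v ∨ StepII u v

/-- `c` is a derivation from `u` to `v` by braid relations -/
def IsDeriv (u v : List ℕ) (c : List (List ℕ)) : Prop :=
  c.Chain' BraidStep ∧ c.head? = some u ∧ c.getLast? = some v

/-- combinatorial distance: minimal number of braid relations transforming `u` into `v` -/
def dist (u v : List ℕ) : ℕ :=
  sInf {k | ∃ c, IsDeriv u v c ∧ c.length = k + 1}

/-- the word `s_{j,i} = s_{j-1} s_{j-2} ... s_i` (empty if `j ≤ i`) -/
def sji (j i : ℕ) : List ℕ := (List.range (j - i)).map (fun k => j - 1 - k)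

/-- the normal word `s_{1,f(1)} s_{2,f(2)} ... s_{n,f(n)}` -/
def normalWord (n : ℕ) (f : ℕ → ℕ) : List ℕ :=
  ((List.range n).map (fun k => sji (k + 1) (f (k + 1)))).flatten

/-- `f : {1,...,n} → {1,...,n}` with `1 ≤ f i ≤ i` for all `i` -/
def IsNormalFun (n : ℕ) (f : ℕ → ℕ) : Prop := ∀ i ∈ Finset.Icc 1 n, 1 ≤ f i ∧ f i ≤ i

/-- names of the successive crossings: the name of a letter is the pair of starting
positions of the two strands crossing there -/
def namesAux : Equiv.Perm ℕ → List ℕ → List (Finset ℕ)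
  | _, [] => []
  | π, i :: rest => ({π⁻¹ i, π⁻¹ (i + 1)} : Finset ℕ) :: namesAux (s i * π) rest

/-- the name sequence `S(w)` of a word -/
def names (w : List ℕ) : List (Finset ℕ) := namesAux 1 w

/-- two entries occur in the same relative order in `S` and `S'` -/
def sameOrder (S S' : List (Finset ℕ)) (a b : Finset ℕ) : Prop :=
  (S.idxOf a < S.idxOf b) ↔ (S'.idxOf a < S'.idxOf b)

/-- `I₃(S,S')`: number of triples `{p,q,r} ⊆ {1,...,n}` such that the relative order of
the three pairs `{p,q}, {p,r}, {q,r}` is not the same in `S` and `S'` -/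
def I3 (n : ℕ) (S S' : List (Finset ℕ)) : ℕ :=
  (((Finset.Icc 1 n).powersetCard 3).filter (fun t =>
    ¬ ∀ a ∈ t.powersetCard 2, ∀ b ∈ t.powersetCard 2, sameOrder S S' a b)).card

/-- `I₂,₂(S,S')`: number of unordered pairs of disjoint pairs in `{1,...,n}` whose
relative order is not the same in `S` and `S'` -/
def I22 (n : ℕ) (S S' : List (Finset ℕ)) : ℕ :=
  ((((Finset.Icc 1 n).powersetCard 2).powersetCard 2).filter (fun P =>
    (∀ a ∈ P, ∀ b ∈ P, a ≠ b → Disjoint a b) ∧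
    ¬ ∀ a ∈ P, ∀ b ∈ P, sameOrder S S' a b)).card

/-- total number of unordered pairs of entries whose relative order differs -/
def InvCount (S S' : List (Finset ℕ)) : ℕ :=
  ((S.toFinset.powersetCard 2).filter (fun P =>
    ¬ ∀ a ∈ P, ∀ b ∈ P, sameOrder S S' a b)).card

/-- number of type I steps in a derivation -/
def countStepsI (c : List (List ℕ)) : ℕ :=
  ((Finset.range (c.length - 1)).filter (fun k => StepI (c.getD k []) (c.getD (k + 1) []))).card

/-- number of type II steps in a derivation -/
def countStepsII (c : List (List ℕ)) : ℕ :=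
  ((Finset.range (c.length - 1)).filter (fun k => StepII (c.getD k []) (c.getD (k + 1) []))).card

/-- position of the strand starting at position `p` after the first `k` letters of `w` -/
def strandPos (w : List ℕ) (p k : ℕ) : ℕ := wperm (w.take k) p

/-- number of unit squares to the right of the `n`-th strand in the braid diagram of `w`,
drawn on an `(n-1) × length w` grid -/
def area (n : ℕ) (w : List ℕ) : ℕ :=
  ((List.range w.length).map (fun k => n - max (strandPos w n k) (strandPos w n (k + 1)))).sum

/-- `u_n = s_{1,1} s_{2,1} ... s_{n,1}` -/
def uWord (n : ℕ) : List ℕ := ((List.range n).map (fun k => sji (k + 1) 1)).flatten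

/-- `v_n = s_{n,1} s_{n,2} ... s_{n,n-1}` -/
def vWord (n : ℕ) : List ℕ := ((List.range (n - 1)).map (fun k => sji n (k + 1))).flatten


section Aux

lemma wperm_nil : wperm [] = 1 := rfl

lemma wperm_cons (i : ℕ) (w : List ℕ) : wperm (i :: w) = wperm w * s i := by
  simp [wperm]

lemma namesAux_cons (π : Equiv.Perm ℕ) (i : ℕ) (w : List ℕ) :
    namesAux π (i :: w) = ({π⁻¹ i, π⁻¹ (i+1)} : Finset ℕ) :: namesAux (s i * π) w := rfl

lemma namesAux_append (u v : List ℕ) : ∀ π : Equiv.Perm ℕ,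
    namesAux π (u ++ v) = namesAux π u ++ namesAux (wperm u * π) v := by
  induction u with
  | nil => intro π; simp [wperm_nil, namesAux]
  | cons i u ih =>
    intro π
    simp only [List.cons_append, namesAux_cons, ih (s i * π), wperm_cons, List.cons.injEq,
      true_and]
    rw [mul_assoc]

lemma s_apply_of_ne (i x : ℕ) (h1 : x ≠ i) (h2 : x ≠ i + 1) : s i x = x :=
  Equiv.swap_apply_of_ne_of_ne h1 h2

lemma s_apply_left (i : ℕ) : s i i = i + 1 := Equiv.swap_apply_left i (i+1)

lemma s_apply_right (i : ℕ) : s i (i+1) = i := Equiv.swap_apply_right i (i+1)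

lemma s_inv (i : ℕ) : (s i)⁻¹ = s i := by unfold s; exact Equiv.swap_inv i (i+1)

lemma s_braid (i : ℕ) : s i * s (i+1) * s i = s (i+1) * s i * s (i+1) := by
  have h1 : s i * s (i+1) * s i = Equiv.swap (s i (i+1)) (s i (i+2)) := by
    rw [Equiv.swap_apply_apply]
    unfold s
    rw [Equiv.swap_inv]
  have h2 : s (i+1) * s i * s (i+1) = Equiv.swap (s (i+1) i) (s (i+1) (i+1)) := by
    rw [Equiv.swap_apply_apply]
    unfold s
    rw [Equiv.swap_inv]
  rw [h1, h2]
  rw [show s i (i+1) = i from Equiv.swap_apply_right i (i+1),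
    show s i (i+2) = i+2 from Equiv.swap_apply_of_ne_of_ne (by omega) (by omega),
    show s (i+1) i = i from Equiv.swap_apply_of_ne_of_ne (by omega) (by omega),
    show s (i+1) (i+1) = i+2 from Equiv.swap_apply_left (i+1) (i+2)]

lemma s_comm (i j : ℕ) (h : i + 2 ≤ j ∨ j + 2 ≤ i) : s i * s j = s j * s i := by
  have hj : s i j = j := Equiv.swap_apply_of_ne_of_ne (by omega) (by omega)
  have hj1 : s i (j+1) = j+1 := Equiv.swap_apply_of_ne_of_ne (by omega) (by omega)
  have key : Equiv.swap (s i j) (s i (j+1)) = s i * s j * (s i)⁻¹ :=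
    Equiv.swap_apply_apply (s i) j (j+1)
  rw [hj, hj1] at key
  have key2 : s j = s i * s j * (s i)⁻¹ := key
  calc s i * s j = (s i * s j * (s i)⁻¹) * s i := by group
  _ = s j * s i := by rw [← key2]

lemma mul_inv_apply (π : Equiv.Perm ℕ) (i x : ℕ) : (s i * π)⁻¹ x = π⁻¹ (s i x) := by
  rw [mul_inv_rev, s_inv, Equiv.Perm.mul_apply]

end Aux
section FilterHelpers

lemma filter_swap2 {α : Type*} (p : α → Bool) (x y : α) (L : List α)
    (h : ¬ (p x = true ∧ p y = true)) :
    (x :: y :: L).filter p = (y :: x :: L).filter p := by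
  cases hx : p x <;> cases hy : p y <;> simp [List.filter, hx, hy] <;> exact absurd ⟨hx, hy⟩ h

lemma filter_swap3 {α : Type*} (p : α → Bool) (x y z : α) (L : List α)
    (hxy : ¬ (p x = true ∧ p y = true)) (hxz : ¬ (p x = true ∧ p z = true))
    (hyz : ¬ (p y = true ∧ p z = true)) :
    (x :: y :: z :: L).filter p = (z :: y :: x :: L).filter p := by
  cases hx : p x <;> cases hy : p y <;> cases hz : p z <;>
    simp [List.filter, hx, hy, hz]
  · exact absurd ⟨hy, hz⟩ hyz
  · exact absurd ⟨hx, hz⟩ hxz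
  · exact absurd ⟨hx, hy⟩ hxy
  · exact absurd ⟨hx, hy⟩ hxy

lemma range_map_filter_head {α : Type*} (f : ℕ → α) (p : α → Bool) (a : ℕ) :
    ∀ (n : ℕ), a < n → p (f a) = true → (∀ j < a, ¬ p (f j) = true) →
    ∃ L, ((List.range n).map f).filter p = f a :: L := by
  intro n
  induction n with
  | zero => omega
  | succ n ih =>
    intro han hpa hb
    rw [List.range_succ, List.map_append, List.filter_append]
    by_cases h : a < n
    · obtain ⟨L, hL⟩ := ih h hpa hb
      exact ⟨L ++ ([f n].filter p), by rw [hL]; simp⟩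
    · have : a = n := by omega
      subst this
      have h0 : ((List.range a).map f).filter p = [] := by
        apply List.filter_eq_nil_iff.mpr
        intro x hx
        simp only [List.mem_map, List.mem_range] at hx
        obtain ⟨j, hj, rfl⟩ := hx
        exact hb j hj
      refine ⟨[], by simp [h0, List.filter, hpa]⟩

lemma card_two {a b : ℕ} (h : a ≠ b) : ({a, b} : Finset ℕ).card = 2 := by
  rw [Finset.card_insert_of_notMem (by simp [h]), Finset.card_singleton]

lemma card_three {a b c : ℕ} (h1 : a ≠ b) (h2 : a ≠ c) (h3 : b ≠ c) :
    ({a, b, c} : Finset ℕ).card = 3 := by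
  rw [Finset.card_insert_of_notMem (by simp [h1, h2]), card_two h3]

lemma card_four {a b c d : ℕ} (h1 : a ≠ b) (h2 : a ≠ c) (h3 : a ≠ d) (h4 : b ≠ c)
    (h5 : b ≠ d) (h6 : c ≠ d) : ({a, b, c, d} : Finset ℕ).card = 4 := by
  rw [Finset.card_insert_of_notMem (by simp [h1, h2, h3]), card_three h4 h5 h6]

end FilterHelpers

/-- the invariant: first crossing among the strands of `T` -/
def invT (T : Finset ℕ) (w : List ℕ) : Option (Finset ℕ) :=
  ((names w).filter (fun a => decide (a ⊆ T))).head?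

section StepLemmas

lemma pair_subset_iff (a b : ℕ) (T : Finset ℕ) :
    ({a, b} : Finset ℕ) ⊆ T ↔ a ∈ T ∧ b ∈ T := by
  simp [Finset.insert_subset_iff]

lemma invT_stepII {u v : List ℕ} (h : StepII u v) (T : Finset ℕ) (hT : T.card = 3) :
    invT T u = invT T v := by
  obtain ⟨a, b, i, j, hij⟩ := h
  unfold invT names
  have e1 : (i :: j :: b) = [i] ++ (j :: b) := rfl
  rw [namesAux_append a (i :: j :: b) 1, namesAux_append a (j :: i :: b) 1]
  set π := wperm a * 1 with hπ
  have hsj : s i j = j := s_apply_of_ne _ _ (by omega) (by omega)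
  have hsj1 : s i (j+1) = j+1 := s_apply_of_ne _ _ (by omega) (by omega)
  have hsi : s j i = i := s_apply_of_ne _ _ (by omega) (by omega)
  have hsi1 : s j (i+1) = i+1 := s_apply_of_ne _ _ (by omega) (by omega)
  rw [namesAux_cons, namesAux_cons, namesAux_cons, namesAux_cons]
  simp only [mul_inv_apply, hsj, hsj1, hsi, hsi1]
  have hperm : s j * (s i * π) = s i * (s j * π) := by
    rw [← mul_assoc, ← mul_assoc, s_comm j i hij.symm, mul_assoc, mul_assoc]
  rw [hperm, List.filter_append, List.filter_append]
  congr 1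
  refine congrArg (fun l => List.filter (fun a => decide (a ⊆ T)) (namesAux 1 a) ++ l)
    (filter_swap2 _ _ _ _ ?_)
  rintro ⟨h1, h2⟩
  simp only [decide_eq_true_eq] at h1 h2
  have hsub : ({π⁻¹ i, π⁻¹ (i+1), π⁻¹ j, π⁻¹ (j+1)} : Finset ℕ) ⊆ T := by
    rw [pair_subset_iff] at h1 h2
    intro x hx
    simp only [Finset.mem_insert, Finset.mem_singleton] at hx
    rcases hx with rfl | rfl | rfl | rfl
    exacts [h1.1, h1.2, h2.1, h2.2]
  have hcard : ({π⁻¹ i, π⁻¹ (i+1), π⁻¹ j, π⁻¹ (j+1)} : Finset ℕ).card = 4 := by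
    apply card_four <;> simp only [ne_eq, EmbeddingLike.apply_eq_iff_eq] <;> omega
  have := Finset.card_le_card hsub
  omega

end StepLemmas
section StepI_Lemma

lemma namesAux_braid1 (π : Equiv.Perm ℕ) (m : ℕ) (b : List ℕ) :
    namesAux π (m :: (m+1) :: m :: b) =
      ({π⁻¹ m, π⁻¹ (m+1)} : Finset ℕ) :: ({π⁻¹ m, π⁻¹ (m+2)} : Finset ℕ) ::
      ({π⁻¹ (m+1), π⁻¹ (m+2)} : Finset ℕ) :: namesAux (s m * (s (m+1) * (s m * π))) b := by
  rw [namesAux_cons, namesAux_cons, namesAux_cons]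
  simp only [mul_inv_apply, s_apply_left, s_apply_right,
    s_apply_of_ne m (m+2) (by omega) (by omega),
    s_apply_of_ne (m+1) m (by omega) (by omega)]

lemma namesAux_braid2 (π : Equiv.Perm ℕ) (m : ℕ) (b : List ℕ) :
    namesAux π ((m+1) :: m :: (m+1) :: b) =
      ({π⁻¹ (m+1), π⁻¹ (m+2)} : Finset ℕ) :: ({π⁻¹ m, π⁻¹ (m+2)} : Finset ℕ) ::
      ({π⁻¹ m, π⁻¹ (m+1)} : Finset ℕ) :: namesAux (s (m+1) * (s m * (s (m+1) * π))) b := by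
  rw [namesAux_cons, namesAux_cons, namesAux_cons]
  simp only [mul_inv_apply, s_apply_left, s_apply_right,
    s_apply_of_ne (m+1) m (by omega) (by omega),
    s_apply_of_ne m (m+2) (by omega) (by omega)]

lemma braid_perm (π : Equiv.Perm ℕ) (m : ℕ) :
    s m * (s (m+1) * (s m * π)) = s (m+1) * (s m * (s (m+1) * π)) := by
  simp only [← mul_assoc]
  rw [s_braid]

lemma invT_stepI {u v : List ℕ} (h : StepI u v) :
    ∃ T₀ : Finset ℕ, ∀ T : Finset ℕ, T.card = 3 → T ≠ T₀ → invT T u = invT T v := by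
  obtain ⟨a, b, i, j, hij⟩ := h
  rcases hij with rfl | rfl
  · -- j = i + 1
    set π := wperm a * 1 with hπ
    set x := π⁻¹ i with hx
    set y := π⁻¹ (i+1) with hy
    set z := π⁻¹ (i+2) with hz
    refine ⟨{x, y, z}, ?_⟩
    intro T hT hTne
    have key : ¬ (x ∈ T ∧ y ∈ T ∧ z ∈ T) := by
      rintro ⟨h1, h2, h3⟩
      apply hTne
      refine (Finset.eq_of_subset_of_card_le ?_ ?_).symm
      · intro w hw
        simp only [Finset.mem_insert, Finset.mem_singleton] at hw
        rcases hw with rfl | rfl | rfl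
        exacts [h1, h2, h3]
      · have : ({x, y, z} : Finset ℕ).card = 3 := by
          apply card_three <;> simp only [hx, hy, hz, ne_eq, EmbeddingLike.apply_eq_iff_eq] <;>
            omega
        omega
    unfold invT names
    rw [namesAux_append, namesAux_append, namesAux_braid1, namesAux_braid2, braid_perm, ← hπ,
      ← hx, ← hy, ← hz, List.filter_append, List.filter_append]
    congr 1
    refine congrArg (fun l => List.filter (fun a => decide (a ⊆ T)) (namesAux 1 a) ++ l)
      (filter_swap3 _ _ _ _ _ ?_ ?_ ?_) <;>
    · rintro ⟨h1, h2⟩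
      simp only [decide_eq_true_eq, pair_subset_iff] at h1 h2
      exact key ⟨by tauto, by tauto, by tauto⟩
  · -- i = j + 1
    set π := wperm a * 1 with hπ
    set x := π⁻¹ j with hx
    set y := π⁻¹ (j+1) with hy
    set z := π⁻¹ (j+2) with hz
    refine ⟨{x, y, z}, ?_⟩
    intro T hT hTne
    have key : ¬ (x ∈ T ∧ y ∈ T ∧ z ∈ T) := by
      rintro ⟨h1, h2, h3⟩
      apply hTne
      refine (Finset.eq_of_subset_of_card_le ?_ ?_).symm
      · intro w hw
        simp only [Finset.mem_insert, Finset.mem_singleton] at hw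
        rcases hw with rfl | rfl | rfl
        exacts [h1, h2, h3]
      · have : ({x, y, z} : Finset ℕ).card = 3 := by
          apply card_three <;> simp only [hx, hy, hz, ne_eq, EmbeddingLike.apply_eq_iff_eq] <;>
            omega
        omega
    unfold invT names
    rw [namesAux_append, namesAux_append, namesAux_braid2, namesAux_braid1, braid_perm, ← hπ,
      ← hx, ← hy, ← hz, List.filter_append, List.filter_append]
    congr 1
    refine congrArg (fun l => List.filter (fun a => decide (a ⊆ T)) (namesAux 1 a) ++ l)
      ((filter_swap3 _ _ _ _ _ ?_ ?_ ?_).symm) <;>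
    · rintro ⟨h1, h2⟩
      simp only [decide_eq_true_eq, pair_subset_iff] at h1 h2
      exact key ⟨by tauto, by tauto, by tauto⟩

end StepI_Lemma
section Tau

/-- permutation after `k` blocks of `v_n` -/
def tauFun (n k i : ℕ) : ℕ := if 1 ≤ i ∧ i ≤ n then (if i ≤ n - k then i + k else n + 1 - i) else i

def tauInvFun (n k j : ℕ) : ℕ :=
  if 1 ≤ j ∧ j ≤ n then (if j ≤ k then n + 1 - j else j - k) else j

def tauPerm (n k : ℕ) : Equiv.Perm ℕ where
  toFun := tauFun n k
  invFun := tauInvFun n k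
  left_inv := by intro i; unfold tauFun tauInvFun; split_ifs <;> omega
  right_inv := by intro j; unfold tauFun tauInvFun; split_ifs <;> omega

lemma tauPerm_apply (n k i : ℕ) : tauPerm n k i = tauFun n k i := rfl

lemma tauPerm_inv_apply (n k j : ℕ) : (tauPerm n k)⁻¹ j = tauInvFun n k j := rfl

lemma tauPerm_zero (n : ℕ) : tauPerm n 0 = 1 := by
  ext i
  simp only [tauPerm_apply, tauFun, Equiv.Perm.one_apply]
  split_ifs <;> omega

end Tau

section Sji

lemma sji_nil (i : ℕ) : sji i i = [] := by simp [sji]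

lemma sji_succ (j i : ℕ) (h : i ≤ j) : sji (j + 1) i = j :: sji j i := by
  unfold sji
  rw [show j + 1 - i = (j - i) + 1 from by omega, List.range_succ_eq_map, List.map_cons,
    List.map_map]
  simp only [Nat.add_sub_cancel, Nat.sub_zero, List.cons.injEq, true_and]
  apply List.map_congr_left
  intro k _
  simp only [Function.comp_apply, Nat.succ_eq_add_one]
  omega

lemma wperm_sji_apply (i : ℕ) : ∀ (m x : ℕ),
    wperm (sji (i + m) i) x =
      if x = i + m then i else if i ≤ x ∧ x < i + m then x + 1 else x := by
  intro m
  induction m with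
  | zero =>
    intro x
    show wperm (sji i i) x = _
    rw [sji_nil, wperm_nil]
    simp only [Equiv.Perm.one_apply]
    split_ifs <;> omega
  | succ m ih =>
    intro x
    show wperm (sji ((i + m) + 1) i) x = _
    rw [sji_succ (i + m) i (by omega), wperm_cons, Equiv.Perm.mul_apply, ih]
    rcases Nat.lt_trichotomy x (i + m) with h | h | h
    · rw [s_apply_of_ne (i+m) x (by omega) (by omega)]
      split_ifs <;> omega
    · subst h
      rw [s_apply_left]
      split_ifs <;> omega
    · by_cases hx : x = i + m + 1
      · subst hx
        rw [s_apply_right]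
        split_ifs <;> omega
      · rw [s_apply_of_ne (i+m) x (by omega) (by omega)]
        split_ifs <;> omega

lemma namesAux_sji (i : ℕ) : ∀ (m : ℕ) (π : Equiv.Perm ℕ),
    namesAux π (sji (i + m) i) =
      (List.range m).map (fun t => ({π⁻¹ (i + m - 1 - t), π⁻¹ (i + m)} : Finset ℕ)) := by
  intro m
  induction m with
  | zero =>
    intro π
    show namesAux π (sji i i) = _
    rw [sji_nil]
    simp [namesAux]
  | succ m ih =>
    intro π
    show namesAux π (sji ((i + m) + 1) i) =
      (List.range (m+1)).map (fun t => ({π⁻¹ (i + m - t), π⁻¹ (i + m + 1)} : Finset ℕ))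
    rw [sji_succ (i + m) i (by omega), namesAux_cons, ih (s (i+m) * π),
      List.range_succ_eq_map, List.map_cons, List.map_map]
    simp only [Nat.sub_zero, List.cons.injEq]
    refine ⟨trivial, ?_⟩
    apply List.map_congr_left
    intro t ht
    simp only [List.mem_range] at ht
    simp only [Function.comp_apply, mul_inv_apply, Nat.succ_eq_add_one]
    rw [s_apply_of_ne (i+m) (i+m-1-t) (by omega) (by omega), s_apply_left,
      show i + m - 1 - t = i + m - (t+1) from by omega]

end Sji
section Words

lemma wperm_append (u v : List ℕ) : wperm (u ++ v) = wperm v * wperm u := by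
  unfold wperm
  rw [List.map_append, List.reverse_append, List.prod_append]

def vPart (n k : ℕ) : List ℕ := ((List.range k).map (fun t => sji n (t+1))).flatten

lemma vWord_eq_vPart (n : ℕ) : vWord n = vPart n (n-1) := rfl

lemma uWord_succ (n : ℕ) : uWord (n+1) = uWord n ++ sji (n+1) 1 := by
  unfold uWord
  rw [List.range_succ, List.map_append, List.flatten_append]
  simp

lemma vPart_succ (n k : ℕ) : vPart n (k+1) = vPart n k ++ sji n (k+1) := by
  unfold vPart
  rw [List.range_succ, List.map_append, List.flatten_append]
  simp

lemma tauPerm_nn_zero : tauPerm 0 0 = 1 := tauPerm_zero 0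

lemma wperm_uWord (n : ℕ) : wperm (uWord n) = tauPerm n n := by
  induction n with
  | zero =>
    have : uWord 0 = [] := rfl
    rw [this, wperm_nil, tauPerm_nn_zero]
  | succ n ih =>
    rw [uWord_succ, wperm_append, ih]
    ext x
    rw [Equiv.Perm.mul_apply]
    rw [show sji (n+1) 1 = sji (1 + n) 1 from by rw [Nat.add_comm]]
    rw [wperm_sji_apply 1 n (tauPerm n n x)]
    simp only [tauPerm_apply, tauFun]
    split_ifs <;> omega

lemma wperm_vPart (n : ℕ) : ∀ k, k ≤ n → wperm (vPart n k) = tauPerm n k := by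
  intro k
  induction k with
  | zero =>
    intro _
    have : vPart n 0 = [] := rfl
    rw [this, wperm_nil, tauPerm_zero]
  | succ k ih =>
    intro hk
    rw [vPart_succ, wperm_append, ih (by omega)]
    ext x
    rw [Equiv.Perm.mul_apply]
    rw [show sji n (k+1) = sji ((k+1) + (n - (k+1))) (k+1) from by congr 1; omega]
    rw [wperm_sji_apply (k+1) (n - (k+1)) (tauPerm n k x)]
    simp only [tauPerm_apply, tauFun]
    split_ifs <;> omega

lemma names_uWord_succ (n : ℕ) :
    names (uWord (n+1)) = names (uWord n)
      ++ (List.range n).map (fun t => ({t+1, n+1} : Finset ℕ)) := by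
  unfold names
  rw [uWord_succ, namesAux_append, mul_one, wperm_uWord]
  congr 1
  rw [show sji (n+1) 1 = sji (1 + n) 1 from by rw [Nat.add_comm]]
  rw [namesAux_sji 1 n (tauPerm n n)]
  apply List.map_congr_left
  intro t ht
  simp only [List.mem_range] at ht
  have e1 : (tauPerm n n)⁻¹ (1 + n - 1 - t) = t + 1 := by
    rw [tauPerm_inv_apply]
    unfold tauInvFun
    split_ifs <;> omega
  have e2 : (tauPerm n n)⁻¹ (1 + n) = n + 1 := by
    rw [tauPerm_inv_apply]
    unfold tauInvFun
    split_ifs <;> omega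
  rw [e1, e2]

lemma names_vPart_succ (n k : ℕ) (hk : k + 1 ≤ n) :
    names (vPart n (k+1)) = names (vPart n k)
      ++ (List.range (n-1-k)).map (fun t => ({n-1-k-t, n-k} : Finset ℕ)) := by
  unfold names
  rw [vPart_succ, namesAux_append, mul_one, wperm_vPart n k (by omega)]
  congr 1
  rw [show sji n (k+1) = sji ((k+1) + (n - 1 - k)) (k+1) from by congr 1; omega]
  rw [namesAux_sji (k+1) (n-1-k) (tauPerm n k)]
  apply List.map_congr_left
  intro t ht
  simp only [List.mem_range] at ht
  have e1 : (tauPerm n k)⁻¹ (k + 1 + (n - 1 - k) - 1 - t) = n - 1 - k - t := by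
    rw [tauPerm_inv_apply]
    unfold tauInvFun
    split_ifs <;> omega
  have e2 : (tauPerm n k)⁻¹ (k + 1 + (n - 1 - k)) = n - k := by
    rw [tauPerm_inv_apply]
    unfold tauInvFun
    split_ifs <;> omega
  rw [e1, e2]

end Words
section BaseComputations

lemma mem_triple_iff (x p q r : ℕ) : x ∈ ({p, q, r} : Finset ℕ) ↔ x = p ∨ x = q ∨ x = r := by
  simp [Finset.mem_insert, Finset.mem_singleton]

lemma filter_uWord (p q r : ℕ) (h1 : 1 ≤ p) (h2 : p < q) (h3 : q < r) : ∀ n : ℕ,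
    (q ≤ n → ∃ L, (names (uWord n)).filter (fun a => decide (a ⊆ ({p,q,r} : Finset ℕ)))
        = ({p,q} : Finset ℕ) :: L)
    ∧ (n < q → (names (uWord n)).filter (fun a => decide (a ⊆ ({p,q,r} : Finset ℕ))) = []) := by
  intro n
  induction n with
  | zero =>
    refine ⟨fun h => by omega, fun _ => ?_⟩
    have : names (uWord 0) = [] := rfl
    rw [this, List.filter_nil]
  | succ n ih =>
    constructor
    · intro hq
      rw [names_uWord_succ, List.filter_append]
      by_cases h : q ≤ n
      · obtain ⟨L, hL⟩ := ih.1 h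
        refine ⟨L ++ ((List.range n).map (fun t => ({t+1, n+1} : Finset ℕ))).filter
          (fun a => decide (a ⊆ ({p,q,r} : Finset ℕ))), ?_⟩
        rw [hL, List.cons_append]
      · have hq' : q = n + 1 := by omega
        subst hq'
        rw [ih.2 (by omega), List.nil_append]
        have key := range_map_filter_head (fun t => ({t+1, n+1} : Finset ℕ))
          (fun a => decide (a ⊆ ({p,n+1,r} : Finset ℕ))) (p-1) n (by omega) ?_ ?_
        · obtain ⟨L, hL⟩ := key
          have hbeta : ((fun t => ({t+1, n+1} : Finset ℕ)) (p-1)) = ({p, n+1} : Finset ℕ) := by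
            show ({p-1+1, n+1} : Finset ℕ) = _
            rw [show p - 1 + 1 = p from by omega]
          exact ⟨L, hL.trans (congrArg (· :: L) hbeta)⟩
        · simp only [decide_eq_true_eq, pair_subset_iff, mem_triple_iff]
          refine ⟨by omega, by tauto⟩
        · intro j hj
          simp only [decide_eq_true_eq, pair_subset_iff, mem_triple_iff]
          omega
    · intro hlt
      rw [names_uWord_succ, List.filter_append, ih.2 (by omega), List.nil_append]
      apply List.filter_eq_nil_iff.mpr
      intro x hx
      simp only [List.mem_map, List.mem_range] at hx
      obtain ⟨t, ht, rfl⟩ := hx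
      simp only [decide_eq_true_eq, pair_subset_iff, mem_triple_iff]
      omega

lemma filter_vPart (n p q r : ℕ) (h1 : 1 ≤ p) (h2 : p < q) (h3 : q < r) (h4 : r ≤ n) :
    ∀ k, k ≤ n - 1 →
    (k ≤ n - r → (names (vPart n k)).filter (fun a => decide (a ⊆ ({p,q,r} : Finset ℕ))) = [])
    ∧ (n - r < k → ∃ L, (names (vPart n k)).filter (fun a => decide (a ⊆ ({p,q,r} : Finset ℕ)))
        = ({q,r} : Finset ℕ) :: L) := by
  intro k
  induction k with
  | zero =>
    refine fun _ => ⟨fun _ => ?_, fun h => by omega⟩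
    have : names (vPart n 0) = [] := rfl
    rw [this, List.filter_nil]
  | succ k ih =>
    intro hk
    constructor
    · intro hkr
      rw [names_vPart_succ n k (by omega), List.filter_append, (ih (by omega)).1 (by omega),
        List.nil_append]
      apply List.filter_eq_nil_iff.mpr
      intro x hx
      simp only [List.mem_map, List.mem_range] at hx
      obtain ⟨t, ht, rfl⟩ := hx
      simp only [decide_eq_true_eq, pair_subset_iff, mem_triple_iff]
      omega
    · intro hkr
      rw [names_vPart_succ n k (by omega), List.filter_append]
      by_cases h : n - r < k
      · obtain ⟨L, hL⟩ := (ih (by omega)).2 h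
        refine ⟨L ++ ((List.range (n-1-k)).map (fun t => ({n-1-k-t, n-k} : Finset ℕ))).filter
          (fun a => decide (a ⊆ ({p,q,r} : Finset ℕ))), ?_⟩
        rw [hL, List.cons_append]
      · have hk' : k = n - r := by omega
        subst hk'
        rw [(ih (by omega)).1 (by omega), List.nil_append]
        have key := range_map_filter_head (fun t => ({n-1-(n-r)-t, n-(n-r)} : Finset ℕ))
          (fun a => decide (a ⊆ ({p,q,r} : Finset ℕ))) (r-1-q) (n-1-(n-r)) (by omega) ?_ ?_
        · obtain ⟨L, hL⟩ := key
          have hbeta : ((fun t => ({n-1-(n-r)-t, n-(n-r)} : Finset ℕ)) (r-1-q))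
              = ({q, r} : Finset ℕ) := by
            show ({n-1-(n-r)-(r-1-q), n-(n-r)} : Finset ℕ) = _
            rw [show n-1-(n-r)-(r-1-q) = q from by omega, show n-(n-r) = r from by omega]
          exact ⟨L, hL.trans (congrArg (· :: L) hbeta)⟩
        · simp only [decide_eq_true_eq, pair_subset_iff, mem_triple_iff]
          refine ⟨by omega, by omega⟩
        · intro j hj
          simp only [decide_eq_true_eq, pair_subset_iff, mem_triple_iff]
          omega

lemma invT_uWord (n p q r : ℕ) (h1 : 1 ≤ p) (h2 : p < q) (h3 : q < r) (h4 : r ≤ n) :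
    invT ({p,q,r} : Finset ℕ) (uWord n) = some ({p,q} : Finset ℕ) := by
  obtain ⟨L, hL⟩ := (filter_uWord p q r h1 h2 h3 n).1 (by omega)
  unfold invT
  rw [hL]
  rfl

lemma invT_vWord (n p q r : ℕ) (h1 : 1 ≤ p) (h2 : p < q) (h3 : q < r) (h4 : r ≤ n) :
    invT ({p,q,r} : Finset ℕ) (vWord n) = some ({q,r} : Finset ℕ) := by
  obtain ⟨L, hL⟩ := ((filter_vPart n p q r h1 h2 h3 h4 (n-1) (by omega)).2 (by omega))
  unfold invT
  rw [vWord_eq_vPart, hL]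
  rfl

end BaseComputations
section Counting

lemma card_filter_range_succ (p : ℕ → Prop) [DecidablePred p] (N : ℕ) :
    ((Finset.range (N+1)).filter p).card
      = (if p 0 then 1 else 0) + ((Finset.range N).filter (fun k => p (k+1))).card := by
  rw [Finset.card_filter, Finset.sum_range_succ', Finset.card_filter]
  exact add_comm _ _

lemma countStepsI_singleton (x : List ℕ) : countStepsI [x] = 0 := by
  unfold countStepsI
  simp

lemma countStepsI_cons (x y : List ℕ) (r : List (List ℕ)) :
    countStepsI (x :: y :: r) = (if StepI x y then 1 else 0) + countStepsI (y :: r) := by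
  unfold countStepsI
  have hlen : (x :: y :: r).length - 1 = r.length + 1 := by simp
  have hlen2 : (y :: r).length - 1 = r.length := by simp
  rw [hlen, hlen2, card_filter_range_succ]
  simp only [List.getD_cons_succ, List.getD_cons_zero]

/-- triples of strands on which the invariants of `u` and `v` differ -/
def Bad (n : ℕ) (u v : List ℕ) : Finset (Finset ℕ) :=
  ((Finset.Icc 1 n).powersetCard 3).filter (fun T => invT T u ≠ invT T v)

lemma Bad_triangle (n : ℕ) (u v w : List ℕ) : Bad n u w ⊆ Bad n u v ∪ Bad n v w := by
  intro T hT
  obtain ⟨hmem, hne⟩ := Finset.mem_filter.mp hT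
  rw [Finset.mem_union]
  by_cases h : invT T u = invT T v
  · exact Or.inr (Finset.mem_filter.mpr ⟨hmem, fun hh => hne (h.trans hh)⟩)
  · exact Or.inl (Finset.mem_filter.mpr ⟨hmem, h⟩)

lemma step_bound (n : ℕ) {u v : List ℕ} (h : BraidStep u v) :
    (Bad n u v).card ≤ if StepI u v then 1 else 0 := by
  by_cases hS : StepI u v
  · rw [if_pos hS]
    obtain ⟨T₀, hT₀⟩ := invT_stepI hS
    have hsub : Bad n u v ⊆ {T₀} := by
      intro T hT
      obtain ⟨hmem, hneq⟩ := Finset.mem_filter.mp hT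
      rw [Finset.mem_singleton]
      by_contra hne
      exact hneq (hT₀ T (Finset.mem_powersetCard.mp hmem).2 hne)
    simpa using Finset.card_le_card hsub
  · rw [if_neg hS]
    have hS2 : StepII u v := h.resolve_left hS
    have hempty : Bad n u v = ∅ := by
      apply Finset.filter_eq_empty_iff.mpr
      intro T hmem
      simp only [ne_eq, not_not]
      exact invT_stepII hS2 T (Finset.mem_powersetCard.mp hmem).2
    simp [hempty]

lemma chain_bound (n : ℕ) : ∀ (r : List (List ℕ)) (u : List ℕ),
    List.Chain' BraidStep (u :: r) →
    (Bad n u ((u :: r).getLast (List.cons_ne_nil u r))).card ≤ countStepsI (u :: r) := by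
  intro r
  induction r with
  | nil =>
    intro u _
    rw [countStepsI_singleton]
    have : Bad n u ((u :: []).getLast (List.cons_ne_nil u [])) = ∅ := by
      apply Finset.filter_eq_empty_iff.mpr
      intro T _
      simp
    rw [show [u].getLast (List.cons_ne_nil u []) = u from rfl] at this
    simp [this]
  | cons v r ih =>
    intro u hchain
    obtain ⟨hstep, hchain'⟩ := List.isChain_cons_cons.mp hchain
    rw [countStepsI_cons]
    have hgl : (u :: v :: r).getLast (List.cons_ne_nil u (v :: r))
        = (v :: r).getLast (List.cons_ne_nil v r) := List.getLast_cons _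
    rw [hgl]
    calc (Bad n u ((v :: r).getLast (List.cons_ne_nil v r))).card
        ≤ (Bad n u v ∪ Bad n v ((v :: r).getLast (List.cons_ne_nil v r))).card :=
          Finset.card_le_card (Bad_triangle n u v _)
      _ ≤ (Bad n u v).card + (Bad n v ((v :: r).getLast (List.cons_ne_nil v r))).card :=
          Finset.card_union_le _ _
      _ ≤ (if StepI u v then 1 else 0) + countStepsI (v :: r) :=
          Nat.add_le_add (step_bound n hstep) (ih v hchain')

lemma exists_sorted (T : Finset ℕ) (hT : T.card = 3) :
    ∃ p q r, p < q ∧ q < r ∧ T = {p, q, r} := by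
  obtain ⟨a, b, c, hab, hac, hbc, rfl⟩ := Finset.card_eq_three.mp hT
  have perm : ∀ x y z : ℕ, ({x, y, z} : Finset ℕ) = {a, b, c} →
      (x = a ∨ x = b ∨ x = c) → True := fun _ _ _ _ _ => trivial
  rcases Nat.lt_trichotomy a b with h1 | h1 | h1
  · rcases Nat.lt_trichotomy b c with h2 | h2 | h2
    · exact ⟨a, b, c, h1, h2, rfl⟩
    · exact absurd h2 hbc
    · rcases Nat.lt_trichotomy a c with h3 | h3 | h3
      · exact ⟨a, c, b, h3, h2, by ext x; simp [Finset.mem_insert]; tauto⟩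
      · exact absurd h3 hac
      · exact ⟨c, a, b, h3, h1, by ext x; simp [Finset.mem_insert]; tauto⟩
  · exact absurd h1 hab
  · rcases Nat.lt_trichotomy a c with h2 | h2 | h2
    · exact ⟨b, a, c, h1, h2, by ext x; simp [Finset.mem_insert]; tauto⟩
    · exact absurd h2 hac
    · rcases Nat.lt_trichotomy b c with h3 | h3 | h3
      · exact ⟨b, c, a, h3, h2, by ext x; simp [Finset.mem_insert]; tauto⟩
      · exact absurd h3 hbc
      · exact ⟨c, b, a, h3, h1, by ext x; simp [Finset.mem_insert]; tauto⟩

end Counting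

/-- Every derivation of `v_n` from `u_n` by braid relations uses at least
`C(n,3)` relations of type I. -/
theorem flip_typeI_lower_bound (n : ℕ) (c : List (List ℕ))
    (hc : IsDeriv (uWord n) (vWord n) c) :
    countStepsI c ≥ n.choose 3 := by
  obtain ⟨hchain, hhead, hlast⟩ := hc
  cases c with
  | nil => simp at hhead
  | cons w r =>
    have hw : w = uWord n := by
      simp only [List.head?_cons, Option.some.injEq] at hhead
      exact hhead
    subst hw
    have hlast' : (uWord n :: r).getLast (List.cons_ne_nil _ _) = vWord n := by
      rw [List.getLast?_eq_getLast (List.cons_ne_nil _ _), Option.some.injEq] at hlast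
      exact hlast
    have main := chain_bound n r (uWord n) hchain
    rw [hlast'] at main
    have hfull : Bad n (uWord n) (vWord n) = (Finset.Icc 1 n).powersetCard 3 := by
      apply Finset.filter_eq_self.mpr
      intro T hmem
      obtain ⟨hsub, hcard⟩ := Finset.mem_powersetCard.mp hmem
      obtain ⟨p, q, r', h1, h2, rfl⟩ := exists_sorted T hcard
      have hp : p ∈ Finset.Icc 1 n := hsub (by simp [mem_triple_iff])
      have hr : r' ∈ Finset.Icc 1 n := hsub (by simp [mem_triple_iff])
      rw [Finset.mem_Icc] at hp hr
      rw [invT_uWord n p q r' hp.1 h1 h2 hr.2, invT_vWord n p q r' hp.1 h1 h2 hr.2]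
      intro hcontra
      rw [Option.some.injEq] at hcontra
      have : r' ∈ ({p, q} : Finset ℕ) := by
        rw [hcontra]
        simp
      simp only [Finset.mem_insert, Finset.mem_singleton] at this
      omega
    have hcardIcc : (Finset.Icc 1 n).card = n := by
      rw [Nat.card_Icc]
      omega
    have : (Bad n (uWord n) (vWord n)).card = n.choose 3 := by
      rw [hfull, Finset.card_powersetCard, hcardIcc]
    omega

end
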